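/- Let p be a sub-critical pmf on ℕ with p_0 > 0, unbounded support, and mean μ_p < 1. Then the maximal out-degree M(τ) of the Galton-Watson tree τ with offspring distribution p has finite expectation: E[M(τ)] = Σ_{n≥0} (1 − H(n)) < ∞, where H is the cdf of M(τ). -/

import Mathlib

open MeasureTheory

/-- Encoding of the Galton-Watson tree: `ω : List ℕ → ℕ` assigns a potential
out-degree to every Ulam–Harris word; `u` belongs to the tree iff each of its
coordinates is below the out-degree of the corresponding ancestor. -/
def memTree (ω : List ℕ → ℕ) (u : List ℕ) : Prop :=
  ∀ n < u.length, u.getD n 0 < ω (u.take n)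

/-- The maximal out-degree `M(τ)` of the tree encoded by `ω`, valued in `ℝ≥0∞`. -/
noncomputable def maxDeg (ω : List ℕ → ℕ) : ENNReal :=
  ⨆ (u : List ℕ) (_ : memTree ω u), (ω u : ENNReal)

lemma tsum_pi_fin : ∀ {k : ℕ} (g : Fin k → ℕ → ENNReal),
    ∑' v : Fin k → ℕ, ∏ i, g i (v i) = ∏ i, ∑' m, g i m := by
  intro k
  induction k with
  | zero =>
    intro g
    simp only [Finset.univ_eq_empty, Finset.prod_empty]
    exact tsum_eq_single (fun i => i.elim0) (fun b hb => absurd (funext fun i => i.elim0) hb) |>.trans rfl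
  | succ k ih =>
    intro g
    rw [← (Fin.consEquiv (fun _ : Fin (k+1) => ℕ)).tsum_eq]
    have : ∀ q : ℕ × (Fin k → ℕ),
        (∏ i, g i ((Fin.consEquiv (fun _ : Fin (k+1) => ℕ)) q i))
          = g 0 q.1 * ∏ i : Fin k, g i.succ (q.2 i) := by
      rintro ⟨a, v⟩
      rw [Fin.prod_univ_succ]
      simp [Fin.consEquiv]
    rw [tsum_congr this, ENNReal.tsum_prod (f := fun (a : ℕ) (v : Fin k → ℕ) => g 0 a * ∏ i : Fin k, g i.succ (v i))]
    simp only [ENNReal.tsum_mul_left]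
    rw [tsum_congr (fun a => by rw [ih fun i => g i.succ]), ENNReal.tsum_mul_right,
      Fin.prod_univ_succ]

lemma meas_pi (p : ℕ → ℝ) (μ : Measure (List ℕ → ℕ))
    (hcyl : ∀ (s : Finset (List ℕ)) (f : List ℕ → ℕ),
      μ {ω | ∀ u ∈ s, ω u = f u} = ∏ u ∈ s, ENNReal.ofReal (p (f u)))
    {k : ℕ} (c : Fin k → List ℕ) (hc : Function.Injective c) (A : Fin k → Set ℕ) :
    μ {ω | ∀ i, ω (c i) ∈ A i} =
      ∏ i, ∑' m, Set.indicator (A i) (fun m => ENNReal.ofReal (p m)) m := by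
  classical
  set P : ℕ → ENNReal := fun m => ENNReal.ofReal (p m) with hP
  have hC : ∀ v : Fin k → ℕ, μ {ω | ∀ i, ω (c i) = v i} = ∏ i, P (v i) := by
    intro v
    set f : List ℕ → ℕ := fun w => if h : ∃ i, c i = w then v h.choose else 0 with hfdef
    have hf : ∀ i, f (c i) = v i := by
      intro i
      have h : ∃ j, c j = c i := ⟨i, rfl⟩
      simp only [hfdef, dif_pos h]
      exact congrArg v (hc h.choose_spec)
    have hset : {ω : List ℕ → ℕ | ∀ i, ω (c i) = v i}
        = {ω | ∀ u ∈ Finset.image c Finset.univ, ω u = f u} := by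
      ext ω
      constructor
      · intro h u hu
        obtain ⟨i, _, rfl⟩ := Finset.mem_image.mp hu
        rw [hf]; exact h i
      · intro h i
        have := h (c i) (Finset.mem_image_of_mem c (Finset.mem_univ i))
        rw [hf] at this; exact this
    rw [hset, hcyl, Finset.prod_image (fun a _ b _ h => hc h)]
    exact Finset.prod_congr rfl fun i _ => by rw [hf]
  have hdecomp : {ω : List ℕ → ℕ | ∀ i, ω (c i) ∈ A i}
      = ⋃ v : Fin k → ℕ, {ω | (∀ i, ω (c i) = v i) ∧ ∀ i, v i ∈ A i} := by
    ext ω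
    simp only [Set.mem_setOf_eq, Set.mem_iUnion]
    constructor
    · intro h; exact ⟨fun i => ω (c i), fun i => rfl, h⟩
    · rintro ⟨v, hv, hA⟩ i; rw [hv i]; exact hA i
  have hdisj : Pairwise (Function.onFun Disjoint
      fun v : Fin k → ℕ => {ω : List ℕ → ℕ | (∀ i, ω (c i) = v i) ∧ ∀ i, v i ∈ A i}) := by
    intro v w hvw
    rw [Function.onFun, Set.disjoint_left]
    rintro ω ⟨h1, _⟩ ⟨h2, _⟩
    exact hvw (funext fun i => (h1 i).symm.trans (h2 i))
  have hmeas : ∀ v : Fin k → ℕ,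
      MeasurableSet {ω : List ℕ → ℕ | (∀ i, ω (c i) = v i) ∧ ∀ i, v i ∈ A i} := by
    intro v
    by_cases hv : ∀ i, v i ∈ A i
    · have : {ω : List ℕ → ℕ | (∀ i, ω (c i) = v i) ∧ ∀ i, v i ∈ A i}
          = ⋂ i, (fun ω : List ℕ → ℕ => ω (c i)) ⁻¹' {v i} := by
        ext ω; simp [hv]
      rw [this]
      exact MeasurableSet.iInter fun i =>
        (measurable_pi_apply (c i)) (measurableSet_singleton (v i))
    · have : {ω : List ℕ → ℕ | (∀ i, ω (c i) = v i) ∧ ∀ i, v i ∈ A i} = ∅ := by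
        ext ω; simp only [Set.mem_setOf_eq, Set.mem_empty_iff_false, iff_false]
        rintro ⟨_, h⟩; exact hv h
      rw [this]; exact MeasurableSet.empty
  rw [hdecomp, measure_iUnion hdisj hmeas]
  have hterm : ∀ v : Fin k → ℕ,
      μ {ω : List ℕ → ℕ | (∀ i, ω (c i) = v i) ∧ ∀ i, v i ∈ A i}
        = ∏ i, Set.indicator (A i) P (v i) := by
    intro v
    by_cases hv : ∀ i, v i ∈ A i
    · have : {ω : List ℕ → ℕ | (∀ i, ω (c i) = v i) ∧ ∀ i, v i ∈ A i}
          = {ω | ∀ i, ω (c i) = v i} := by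
        ext ω; simp [hv]
      rw [this, hC]
      exact Finset.prod_congr rfl fun i _ => (Set.indicator_of_mem (hv i) P).symm
    · push_neg at hv
      obtain ⟨i₀, hi₀⟩ := hv
      have h1 : {ω : List ℕ → ℕ | (∀ i, ω (c i) = v i) ∧ ∀ i, v i ∈ A i} = ∅ := by
        ext ω; simp only [Set.mem_setOf_eq, Set.mem_empty_iff_false, iff_false]
        rintro ⟨_, h⟩; exact hi₀ (h i₀)
      rw [h1, measure_empty]
      exact (Finset.prod_eq_zero (Finset.mem_univ i₀)
        (Set.indicator_of_notMem hi₀ P)).symm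
  rw [tsum_congr hterm]
  exact tsum_pi_fin fun i => Set.indicator (A i) P

open Classical in
lemma enn_eq_tsum_indicator (a : ENNReal)
    (h : ∀ n : ℕ, (n : ENNReal) < a → ((n : ℕ) + 1 : ℕ) ≤ a) :
    a = ∑' n : ℕ, if (n : ENNReal) < a then 1 else 0 := by
  rcases eq_or_ne a ⊤ with rfl | ha
  · have : ∀ n : ℕ, (if (n : ENNReal) < ⊤ then (1:ENNReal) else 0) = 1 := by
      intro n; rw [if_pos (ENNReal.natCast_lt_top n)]
    rw [tsum_congr this, ENNReal.tsum_const_eq_top_of_ne_zero one_ne_zero]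
  · obtain ⟨N, hN⟩ := ENNReal.exists_nat_gt ha
    have hex : ∃ m : ℕ, a ≤ m := ⟨N, hN.le⟩
    set m := Nat.find hex with hm
    have ham : a ≤ m := Nat.find_spec hex
    have hma : (m : ENNReal) ≤ a := by
      rcases Nat.eq_zero_or_pos m with h0 | h0
      · simp [h0]
      · have hlt : ¬ a ≤ (m - 1 : ℕ) := Nat.find_min hex (Nat.sub_lt h0 one_pos)
        have : ((m - 1 : ℕ) : ENNReal) < a := lt_of_not_ge hlt
        have := h (m - 1) this
        rwa [Nat.sub_add_cancel h0] at this
    have haeq : a = (m : ENNReal) := le_antisymm ham hma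
    rw [haeq]
    have hsupp : ∀ n : ℕ, n ∉ Finset.range m →
        (if (n : ENNReal) < (m : ENNReal) then (1:ENNReal) else 0) = 0 := by
      intro n hn
      rw [if_neg]
      rw [Finset.mem_range] at hn
      exact not_lt.mpr (Nat.cast_le.mpr (not_lt.mp hn))
    rw [tsum_eq_sum hsupp]
    have : ∀ n ∈ Finset.range m,
        (if (n : ENNReal) < (m : ENNReal) then (1:ENNReal) else 0) = 1 := by
      intro n hn
      rw [if_pos (Nat.cast_lt.mpr (Finset.mem_range.mp hn))]
    rw [Finset.sum_congr rfl this, Finset.sum_const, Finset.card_range, nsmul_eq_mul, mul_one]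

lemma memTree_measurableSet (u : List ℕ) : MeasurableSet {ω : List ℕ → ℕ | memTree ω u} := by
  have : {ω : List ℕ → ℕ | memTree ω u}
      = ⋂ n, ⋂ (_ : n < u.length), (fun ω : List ℕ → ℕ => ω (u.take n)) ⁻¹' (Set.Ioi (u.getD n 0)) := by
    ext ω; simp [memTree, Set.mem_iInter]
  rw [this]
  exact MeasurableSet.iInter fun n => MeasurableSet.iInter fun _ =>
    (measurable_pi_apply (u.take n)) measurableSet_Ioi

lemma maxDeg_measurable : Measurable maxDeg := by
  classical
  have : maxDeg = fun ω => ⨆ u : List ℕ, if memTree ω u then ((ω u : ℕ) : ENNReal) else 0 := by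
    funext ω
    rw [maxDeg]
    congr 1
    funext u
    by_cases h : memTree ω u
    · rw [if_pos h, iSup_pos h]
    · rw [if_neg h, iSup_neg h]; rfl
  rw [this]
  exact Measurable.iSup fun u =>
    Measurable.ite (memTree_measurableSet u)
      (measurable_from_top.comp (measurable_pi_apply u)) measurable_const

noncomputable def Qof (p : ℕ → ℝ) (a : ℕ) : ENNReal :=
  ∑' m, Set.indicator {x | a < x} (fun m => ENNReal.ofReal (p m)) m

lemma meas_event (p : ℕ → ℝ) (μ : Measure (List ℕ → ℕ))
    (hcyl : ∀ (s : Finset (List ℕ)) (f : List ℕ → ℕ),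
      μ {ω | ∀ u ∈ s, ω u = f u} = ∏ u ∈ s, ENNReal.ofReal (p (f u)))
    (u : List ℕ) (n : ℕ) :
    μ {ω | memTree ω u ∧ n < ω u} =
      (∏ i ∈ Finset.range u.length, Qof p (u.getD i 0)) * Qof p n := by
  classical
  set L := u.length with hL
  set c : Fin (L + 1) → List ℕ := fun i => u.take i.val with hcdef
  have hlen : ∀ i : Fin (L + 1), (c i).length = i.val := by
    intro i
    simp only [hcdef, List.length_take]
    exact min_eq_left (Nat.lt_succ_iff.mp i.isLt)
  have hc : Function.Injective c := by
    intro i j hij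
    apply Fin.ext
    rw [← hlen i, ← hlen j, hij]
  set A : Fin (L + 1) → Set ℕ :=
    fun i => {m | (if (i : ℕ) = L then n else u.getD i.val 0) < m} with hAdef
  have hcu : c (Fin.last L) = u := by
    simp only [hcdef, Fin.val_last, hL]
    exact List.take_length
  have hset : {ω : List ℕ → ℕ | memTree ω u ∧ n < ω u}
      = {ω | ∀ i, ω (c i) ∈ A i} := by
    ext ω
    simp only [Set.mem_setOf_eq]
    constructor
    · rintro ⟨hmt, hn⟩ i
      by_cases hi : (i : ℕ) = L
      · have : i = Fin.last L := Fin.ext hi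
        subst this
        simp only [hAdef, Set.mem_setOf_eq, Fin.val_last, if_pos rfl, hcu]
        exact hn
      · have hilt : i.val < L := lt_of_le_of_ne (Nat.lt_succ_iff.mp i.isLt) hi
        simp only [hAdef, Set.mem_setOf_eq, if_neg hi]
        exact hmt i.val hilt
    · intro h
      constructor
      · intro j hj
        have := h ⟨j, Nat.lt_succ_of_lt hj⟩
        simp only [hAdef, Set.mem_setOf_eq, if_neg (show j ≠ L from Nat.ne_of_lt hj)] at this
        exact this
      · have := h (Fin.last L)
        simp only [hAdef, Set.mem_setOf_eq, Fin.val_last, if_pos rfl, hcu] at this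
        exact this
  rw [hset, meas_pi p μ hcyl c hc A]
  have hterm : ∀ i : Fin (L + 1),
      (∑' m, Set.indicator (A i) (fun m => ENNReal.ofReal (p m)) m)
        = Qof p (if (i : ℕ) = L then n else u.getD i.val 0) := by
    intro i; rfl
  rw [Finset.prod_congr rfl fun i _ => hterm i, Fin.prod_univ_castSucc]
  congr 1
  · rw [← Fin.prod_univ_eq_prod_range (fun i => Qof p (u.getD i 0)) L]
    apply Finset.prod_congr rfl
    intro i _
    have hi : ((Fin.castSucc i : Fin (L+1)) : ℕ) = (i : ℕ) := Fin.coe_castSucc i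
    rw [hi, if_neg (Nat.ne_of_lt i.isLt)]
  · rw [Fin.val_last, if_pos rfl]

lemma tsum_Qof (p : ℕ → ℝ) :
    ∑' a : ℕ, Qof p a = ∑' k : ℕ, (k : ENNReal) * ENNReal.ofReal (p k) := by
  classical
  simp only [Qof]
  rw [ENNReal.tsum_comm]
  apply tsum_congr
  intro k
  have h1 : ∀ a : ℕ, Set.indicator {x | a < x} (fun m => ENNReal.ofReal (p m)) k
      = if a < k then ENNReal.ofReal (p k) else 0 := by
    intro a; rw [Set.indicator_apply]; rfl
  rw [tsum_congr h1,
    tsum_eq_sum (s := Finset.range k)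
      (fun a ha => if_neg (fun h => ha (Finset.mem_range.mpr h)))]
  rw [Finset.sum_congr rfl (fun a ha => if_pos (Finset.mem_range.mp ha)),
    Finset.sum_const, Finset.card_range, nsmul_eq_mul]


/-- For a sub-critical unbounded offspring distribution `p` with `p 0 > 0`,
the maximal out-degree `M(τ)` of the Galton-Watson tree has finite
expectation, and `E[M(τ)] = Σ_{n≥0} (1 − H(n))` where
`1 − H(n) = ℙ(M(τ) > n)`. -/
theorem maxDeg_finite_expectation (p : ℕ → ℝ) (hp : ∀ k, 0 ≤ p k)
    (hsum : ∑' k, p k = 1) (hp0 : 0 < p 0)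
    (hmeanS : Summable fun k : ℕ => (k : ℝ) * p k)
    (hmean : ∑' k : ℕ, (k : ℝ) * p k < 1)
    (hunb : {n : ℕ | 0 < p n}.Infinite)
    (μ : Measure (List ℕ → ℕ)) [IsProbabilityMeasure μ]
    (hcyl : ∀ (s : Finset (List ℕ)) (f : List ℕ → ℕ),
      μ {ω | ∀ u ∈ s, ω u = f u} = ∏ u ∈ s, ENNReal.ofReal (p (f u))) :
    (∫⁻ ω, maxDeg ω ∂μ) = (∑' n : ℕ, μ {ω | (n : ENNReal) < maxDeg ω}) ∧
      (∫⁻ ω, maxDeg ω ∂μ) < ⊤ := by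
  classical
  -- mean in ENNReal
  set M : ENNReal := ∑' k : ℕ, (k : ENNReal) * ENNReal.ofReal (p k) with hMdef
  have hMeq : M = ENNReal.ofReal (∑' k : ℕ, (k : ℝ) * p k) := by
    rw [ENNReal.ofReal_tsum_of_nonneg (fun k => mul_nonneg (Nat.cast_nonneg k) (hp k)) hmeanS]
    exact tsum_congr fun k => by
      rw [ENNReal.ofReal_mul (Nat.cast_nonneg k), ENNReal.ofReal_natCast]
  have hM1 : M < 1 := by rw [hMeq]; exact ENNReal.ofReal_lt_one.mpr hmean
  have hMtop : M < ⊤ := hM1.trans ENNReal.one_lt_top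
  -- sum over trees
  set S : ENNReal := ∑' u : List ℕ, ∏ i ∈ Finset.range u.length, Qof p (u.getD i 0) with hSdef
  have hQM : ∑' a : ℕ, Qof p a = M := tsum_Qof p
  have hS : S = (1 - M)⁻¹ := by
    rw [hSdef, ← (List.equivSigmaTuple (α := ℕ)).symm.tsum_eq
      (fun u => ∏ i ∈ Finset.range u.length, Qof p (u.getD i 0))]
    have hsymm : ∀ σ : (n : ℕ) × (Fin n → ℕ), (List.equivSigmaTuple (α := ℕ)).symm σ = List.ofFn σ.2 := by
      intro σ; rfl
    have h2 : ∀ σ : (n : ℕ) × (Fin n → ℕ),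
        (∏ i ∈ Finset.range ((List.equivSigmaTuple (α := ℕ)).symm σ).length,
          Qof p (((List.equivSigmaTuple (α := ℕ)).symm σ).getD i 0))
          = ∏ i ∈ Finset.range (List.ofFn σ.2).length, Qof p ((List.ofFn σ.2).getD i 0) :=
      fun σ => by rw [hsymm σ]
    rw [tsum_congr h2, ENNReal.tsum_sigma
      (fun ℓ (v : Fin ℓ → ℕ) => ∏ i ∈ Finset.range (List.ofFn v).length, Qof p ((List.ofFn v).getD i 0))]
    rw [← ENNReal.tsum_geometric M]
    apply tsum_congr
    intro ℓ
    have h1 : ∀ v : Fin ℓ → ℕ,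
        (∏ i ∈ Finset.range (List.ofFn v).length, Qof p ((List.ofFn v).getD i 0))
          = ∏ i : Fin ℓ, Qof p (v i) := by
      intro v
      rw [List.length_ofFn, ← Fin.prod_univ_eq_prod_range
        (fun i => Qof p ((List.ofFn v).getD i 0)) ℓ]
      apply Finset.prod_congr rfl
      intro i _
      congr 1
      have hi : (i : ℕ) < (List.ofFn v).length := by rw [List.length_ofFn]; exact i.isLt
      rw [List.getD_eq_getElem _ _ hi, List.getElem_ofFn]
    rw [tsum_congr h1, tsum_pi_fin (fun _ : Fin ℓ => Qof p)]
    simp [hQM]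
  have hStop : S < ⊤ := by
    rw [hS]
    apply ENNReal.inv_lt_top.mpr
    rw [pos_iff_ne_zero]
    intro h
    exact absurd (tsub_eq_zero_iff_le.mp h) (not_le.mpr hM1)
  -- measurability
  have hmeas_lt : ∀ n : ℕ, MeasurableSet {ω : List ℕ → ℕ | (n : ENNReal) < maxDeg ω} :=
    fun n => measurableSet_lt measurable_const maxDeg_measurable
  -- pointwise layer-cake
  have hpt : ∀ ω : List ℕ → ℕ, maxDeg ω
      = ∑' n : ℕ, Set.indicator {ω' : List ℕ → ℕ | (n : ENNReal) < maxDeg ω'} 1 ω := by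
    intro ω
    have hprop : ∀ n : ℕ, (n : ENNReal) < maxDeg ω → ((n + 1 : ℕ) : ENNReal) ≤ maxDeg ω := by
      intro n hn
      rw [maxDeg, lt_iSup_iff] at hn
      obtain ⟨u, hu⟩ := hn
      rw [lt_iSup_iff] at hu
      obtain ⟨hmem, hlt⟩ := hu
      have h4 : ((n + 1 : ℕ) : ENNReal) ≤ ((ω u : ℕ) : ENNReal) :=
        Nat.cast_le.mpr (Nat.succ_le_of_lt (Nat.cast_lt.mp hlt))
      refine h4.trans ?_
      rw [maxDeg]
      exact le_iSup₂ (f := fun (u : List ℕ) (_ : memTree ω u) => ((ω u : ℕ) : ENNReal)) u hmem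
    rw [enn_eq_tsum_indicator (maxDeg ω) hprop]
    apply tsum_congr
    intro n
    rw [Set.indicator_apply]
    simp only [Set.mem_setOf_eq, Pi.one_apply]
  have heq : (∫⁻ ω, maxDeg ω ∂μ) = ∑' n : ℕ, μ {ω | (n : ENNReal) < maxDeg ω} := by
    calc (∫⁻ ω, maxDeg ω ∂μ)
        = ∫⁻ ω, ∑' n : ℕ, Set.indicator {ω' : List ℕ → ℕ | (n : ENNReal) < maxDeg ω'} 1 ω ∂μ :=
          lintegral_congr hpt
      _ = ∑' n : ℕ, ∫⁻ ω, Set.indicator {ω' : List ℕ → ℕ | (n : ENNReal) < maxDeg ω'} 1 ω ∂μ :=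
          lintegral_tsum fun n => (measurable_one.indicator (hmeas_lt n)).aemeasurable
      _ = ∑' n : ℕ, μ {ω | (n : ENNReal) < maxDeg ω} :=
          tsum_congr fun n => lintegral_indicator_one (hmeas_lt n)
  have hbound : ∀ n : ℕ, μ {ω | (n : ENNReal) < maxDeg ω} ≤ S * Qof p n := by
    intro n
    have hsub : {ω : List ℕ → ℕ | (n : ENNReal) < maxDeg ω}
        ⊆ ⋃ u : List ℕ, {ω | memTree ω u ∧ n < ω u} := by
      intro ω hω
      rw [Set.mem_setOf_eq, maxDeg, lt_iSup_iff] at hω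
      obtain ⟨u, hu⟩ := hω
      rw [lt_iSup_iff] at hu
      obtain ⟨hmem, hlt⟩ := hu
      exact Set.mem_iUnion.mpr ⟨u, hmem, Nat.cast_lt.mp hlt⟩
    calc μ {ω | (n : ENNReal) < maxDeg ω}
        ≤ μ (⋃ u : List ℕ, {ω | memTree ω u ∧ n < ω u}) := measure_mono hsub
      _ ≤ ∑' u : List ℕ, μ {ω | memTree ω u ∧ n < ω u} := measure_iUnion_le _
      _ = ∑' u : List ℕ, (∏ i ∈ Finset.range u.length, Qof p (u.getD i 0)) * Qof p n :=
          tsum_congr fun u => meas_event p μ hcyl u n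
      _ = S * Qof p n := ENNReal.tsum_mul_right
  have hfin : (∑' n : ℕ, μ {ω | (n : ENNReal) < maxDeg ω}) < ⊤ := by
    calc (∑' n : ℕ, μ {ω | (n : ENNReal) < maxDeg ω})
        ≤ ∑' n : ℕ, S * Qof p n := Summable.tsum_le_tsum hbound ENNReal.summable ENNReal.summable
      _ = S * M := by rw [ENNReal.tsum_mul_left, hQM]
      _ < ⊤ := ENNReal.mul_lt_top hStop hMtop
  exact ⟨heq, heq ▸ hfin⟩
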